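/- arXiv:2105.13293 — 5 statements merged into one kernel-verified Lean document; each statement's English description precedes it below -/
import Mathlib

section
/- Let h : ℝ → ℝ be a continuous function with |h(s)| ≤ C for all s ∈ ℝ and C > 0, and define for λ = u + iv with v ≠ 0 the function F(λ) = −(1/(2πi)) ∫_ℝ h(s)/(s − λ) ds and δ(λ) = exp(−F(λ)). Then |δ(λ)| ≤ e^{C/2} for all λ with Im λ ≠ 0. -/
open MeasureTheory

private lemma intAux (u v : ℝ) (hv : v ≠ 0) :
    Integrable (fun s : ℝ => |v| / ((s - u)^2 + v^2)) := by
  have h0 : Integrable (fun x : ℝ => (1 + x ^ 2)⁻¹) := integrable_inv_one_add_sq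
  have h1 := (h0.comp_mul_left' (inv_ne_zero hv)).comp_sub_right u
  have h2 := h1.const_mul (|v| / v^2)
  convert h2 using 2 with s
  · field_simp
    exact add_comm _ _

private lemma valAux (u v : ℝ) (hv : v ≠ 0) :
    ∫ s : ℝ, |v| / ((s - u)^2 + v^2) = Real.pi := by
  have e1 : ∫ s : ℝ, |v| / ((s - u)^2 + v^2) = ∫ t : ℝ, |v| / (t^2 + v^2) :=
    integral_sub_right_eq_self (fun t => |v| / (t^2 + v^2)) u
  have e2 : (fun t : ℝ => |v| / (t^2 + v^2)) = fun t => |v⁻¹| • ((1 + (v⁻¹ * t)^2)⁻¹) := by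
    funext t
    rw [smul_eq_mul, abs_inv]
    field_simp
    rw [← sq_abs v]
    ring
  rw [e1, e2, integral_smul, Measure.integral_comp_mul_left (fun x => (1 + x^2)⁻¹) v⁻¹,
    integral_univ_inv_one_add_sq, inv_inv, smul_smul, smul_eq_mul, abs_inv,
    inv_mul_cancel₀ (abs_ne_zero.mpr hv), one_mul]

/-- For `h` continuous with `|h| ≤ C`, setting
`F(λ) = −(1/(2πi)) ∫_ℝ h(s)/(s − λ) ds` and `δ(λ) = exp(−F(λ))`,
we have `|δ(λ)| ≤ e^{C/2}` whenever `Im λ ≠ 0`. -/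
theorem stmt4 (h : ℝ → ℝ) (hc : Continuous h) (C : ℝ) (hC : 0 < C)
    (hb : ∀ s : ℝ, |h s| ≤ C) :
    ∀ lam : ℂ, lam.im ≠ 0 →
      ‖Complex.exp (-(-(1 / (2 * (Real.pi : ℂ) * Complex.I)) *
        ∫ s : ℝ, (h s : ℂ) / ((s : ℂ) - lam)))‖ ≤ Real.exp (C / 2) := by
  intro lam hlam
  set u := lam.re
  set v := lam.im
  rw [Complex.norm_exp, Real.exp_le_exp]
  have hre : ∀ w : ℂ, (-(-(1 / (2 * (Real.pi : ℂ) * Complex.I)) * w)).re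
      = w.im / (2 * Real.pi) := by
    intro w
    simp [Complex.div_re, Complex.div_im, Complex.mul_re, Complex.mul_im, Complex.normSq_apply]
    ring
  rw [hre]
  by_cases hi : Integrable (fun s : ℝ => (h s : ℂ) / ((s : ℂ) - lam))
  · have him : (∫ s : ℝ, (h s : ℂ) / ((s : ℂ) - lam)).im
        = ∫ s : ℝ, ((h s : ℂ) / ((s : ℂ) - lam)).im := (integral_im hi).symm
    have hptim : ∀ s : ℝ, ((h s : ℂ) / ((s : ℂ) - lam)).im
        = h s * v / ((s - u)^2 + v^2) := by
      intro s
      simp [Complex.div_im, Complex.normSq_apply, Complex.sub_re, Complex.sub_im, u, v]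
      ring
    have hbound : ∀ s : ℝ, ((h s : ℂ) / ((s : ℂ) - lam)).im
        ≤ C * (|v| / ((s - u)^2 + v^2)) := by
      intro s
      rw [hptim s]
      have hpos : (0:ℝ) < (s - u)^2 + v^2 := by positivity
      rw [div_le_iff₀ hpos] at *
      calc h s * v ≤ |h s * v| := le_abs_self _
        _ = |h s| * |v| := abs_mul _ _
        _ ≤ C * |v| := by
            exact mul_le_mul_of_nonneg_right (hb s) (abs_nonneg v)
        _ = C * (|v| / ((s - u)^2 + v^2)) * ((s - u)^2 + v^2) := by
            field_simp
    have hint := intAux u v hlam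
    have hle : (∫ s : ℝ, ((h s : ℂ) / ((s : ℂ) - lam)).im)
        ≤ ∫ s : ℝ, C * (|v| / ((s - u)^2 + v^2)) :=
      integral_mono hi.im (hint.const_mul C) hbound
    have hval : (∫ s : ℝ, C * (|v| / ((s - u)^2 + v^2))) = C * Real.pi := by
      rw [MeasureTheory.integral_const_mul, valAux u v hlam]
    rw [him]
    rw [hval] at hle
    rw [div_le_iff₀ (by positivity : (0:ℝ) < 2 * Real.pi)]
    calc (∫ s : ℝ, ((h s : ℂ) / ((s : ℂ) - lam)).im) ≤ C * Real.pi := hle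
      _ = C / 2 * (2 * Real.pi) := by ring
  · rw [integral_undef hi]
    simp
    positivity
end

section
/- Consider the first-order ODE system for complex-valued functions y, s, U of a complex variable X: y′ = −2s, X s′ = s − 2Xy + 4yU, X U′ = U − 4X yU/s + 4 yU²/s (valid where s ≠ 0, X ≠ 0). Then the quantity J(X) := U(X)(U(X) − X)/s(X)² is constant along any solution. -/
set_option maxHeartbeats 1000000


/-- For the system `y′ = −2s`, `Xs′ = s − 2Xy + 4yU`,
`XU′ = U − 4XyU/s + 4yU²/s` (where `s ≠ 0`, `X ≠ 0`), the quantity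
`J = U(U − X)/s²` is constant along any solution. -/
theorem stmt6 (D : Set ℂ) (hD : IsOpen D) (hconn : IsPreconnected D)
    (y s U : ℂ → ℂ)
    (hs : ∀ X ∈ D, s X ≠ 0) (hX : ∀ X ∈ D, X ≠ 0)
    (hy : ∀ X ∈ D, HasDerivAt y (-2 * s X) X)
    (hsd : ∀ X ∈ D, HasDerivAt s ((s X - 2 * X * y X + 4 * y X * U X) / X) X)
    (hU : ∀ X ∈ D, HasDerivAt U
      ((U X - 4 * X * y X * U X / s X + 4 * y X * U X ^ 2 / s X) / X) X) :
    ∀ X₁ ∈ D, ∀ X₂ ∈ D,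
      U X₁ * (U X₁ - X₁) / s X₁ ^ 2 = U X₂ * (U X₂ - X₂) / s X₂ ^ 2 := by
  set g : ℂ → ℂ := fun X => U X * (U X - X) / s X ^ 2 with hg_def
  -- g has zero derivative on D
  have hg : ∀ x ∈ D, HasDerivAt g 0 x := by
    intro x hx
    have hsx := hs x hx
    have hxx := hX x hx
    have hnum : HasDerivAt (fun X => U X * (U X - X))
        ((U x - 4 * x * y x * U x / s x + 4 * y x * U x ^ 2 / s x) / x * (U x - x)
          + U x * ((U x - 4 * x * y x * U x / s x + 4 * y x * U x ^ 2 / s x) / x - 1)) x :=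
      (hU x hx).mul ((hU x hx).sub (hasDerivAt_id x))
    have hden : HasDerivAt (fun X => s X ^ 2)
        (2 * s x ^ 1 * ((s x - 2 * x * y x + 4 * y x * U x) / x)) x := by
      exact ((hsd x hx).pow 2).congr_deriv (by norm_num)
    have h := hnum.div hden (pow_ne_zero 2 hsx)
    refine h.congr_deriv (Eq.symm ?_)
    rw [eq_comm, div_eq_iff]
    · field_simp
      ring
    · exact pow_ne_zero 2 (pow_ne_zero 2 hsx)
  -- g is locally constant on D: constant on balls
  have hloc : ∀ x ∈ D, ∃ ε > 0, Metric.ball x ε ⊆ D ∧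
      ∀ z ∈ Metric.ball x ε, g z = g x := by
    intro x hx
    obtain ⟨ε, hε, hball⟩ := Metric.isOpen_iff.1 hD x hx
    refine ⟨ε, hε, hball, fun z hz => ?_⟩
    have hdiff : DifferentiableOn ℂ g (Metric.ball x ε) := fun w hw =>
      ((hg w (hball hw)).differentiableAt).differentiableWithinAt
    have hfd : ∀ w ∈ Metric.ball x ε, fderivWithin ℂ g (Metric.ball x ε) w = 0 := by
      intro w hw
      rw [fderivWithin_of_isOpen Metric.isOpen_ball hw]
      have := (hg w (hball hw)).hasFDerivAt.fderiv
      rw [this]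
      ext
      simp
    exact (convex_ball x ε).is_const_of_fderivWithin_eq_zero hdiff hfd hz
      (Metric.mem_ball_self hε)
  intro X₁ h₁ X₂ h₂
  choose! ε hε hball hconst using hloc
  set u : Set ℂ := ⋃ (x : ℂ) (_ : x ∈ D ∧ g x = g X₁), Metric.ball x (ε x) with hu_def
  set v : Set ℂ := ⋃ (x : ℂ) (_ : x ∈ D ∧ g x ≠ g X₁), Metric.ball x (ε x) with hv_def
  have hu_open : IsOpen u := isOpen_iUnion fun x => isOpen_iUnion fun _ => Metric.isOpen_ball
  have hv_open : IsOpen v := isOpen_iUnion fun x => isOpen_iUnion fun _ => Metric.isOpen_ball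
  have hdisj : Disjoint u v := by
    rw [Set.disjoint_left]
    rintro z hzu hzv
    simp only [hu_def, hv_def, Set.mem_iUnion] at hzu hzv
    obtain ⟨a, ⟨ha, hga⟩, hza⟩ := hzu
    obtain ⟨b, ⟨hb, hgb⟩, hzb⟩ := hzv
    exact hgb ((hconst b hb z hzb).symm.trans ((hconst a ha z hza).trans hga))
  have hsub : D ⊆ u ∪ v := by
    intro z hz
    by_cases h : g z = g X₁
    · exact Or.inl (Set.mem_iUnion.2 ⟨z, Set.mem_iUnion.2
        ⟨⟨hz, h⟩, Metric.mem_ball_self (hε z hz)⟩⟩)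
    · exact Or.inr (Set.mem_iUnion.2 ⟨z, Set.mem_iUnion.2
        ⟨⟨hz, h⟩, Metric.mem_ball_self (hε z hz)⟩⟩)
  have hne : (D ∩ u).Nonempty := ⟨X₁, h₁, Set.mem_iUnion.2 ⟨X₁, Set.mem_iUnion.2
    ⟨⟨h₁, rfl⟩, Metric.mem_ball_self (hε X₁ h₁)⟩⟩⟩
  have hDu : D ⊆ u := hconn.subset_left_of_subset_union hu_open hv_open hdisj hsub hne
  have h2u := hDu h₂
  simp only [hu_def, Set.mem_iUnion] at h2u
  obtain ⟨a, ⟨ha, hga⟩, h2a⟩ := h2u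
  exact ((hconst a ha X₂ h2a).trans hga).symm
end

section
/- Let u(X) := −y(X)/s(X) where y, s, U solve the system y′ = −2s, X s′ = s − 2Xy + 4yU, X U′ = U − 4XyU/s + 4yU²/s on a domain where s, u, and X are nonzero. Then u satisfies the Painlevé-III equation u″ = (u′)²/u − u′/X + 4/X + 4u³ − 4/u. -/
set_option maxHeartbeats 2000000 in
/-- If `(y, s, U)` solve `y′ = −2s`, `Xs′ = s − 2Xy + 4yU`,
`XU′ = U − 4XyU/s + 4yU²/s` on a domain where `s`, `X`, and `u := −y/s` are
nonzero, then `u` satisfies the Painlevé-III equation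
`u″ = (u′)²/u − u′/X + 4/X + 4u³ − 4/u`. -/
theorem stmt8 (D : Set ℂ) (hD : IsOpen D) (y s U : ℂ → ℂ)
    (hs : ∀ X ∈ D, s X ≠ 0) (hX : ∀ X ∈ D, X ≠ 0) (hy0 : ∀ X ∈ D, y X ≠ 0)
    (hy : ∀ X ∈ D, HasDerivAt y (-2 * s X) X)
    (hsd : ∀ X ∈ D, HasDerivAt s ((s X - 2 * X * y X + 4 * y X * U X) / X) X)
    (hU : ∀ X ∈ D, HasDerivAt U
      ((U X - 4 * X * y X * U X / s X + 4 * y X * U X ^ 2 / s X) / X) X) :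
    ∀ X ∈ D,
      deriv (deriv (fun Z => -y Z / s Z)) X =
        (deriv (fun Z => -y Z / s Z) X) ^ 2 / (-y X / s X)
          - deriv (fun Z => -y Z / s Z) X / X + 4 / X
          + 4 * (-y X / s X) ^ 3 - 4 / (-y X / s X) := by
  set g : ℂ → ℂ := fun Z =>
    2 + y Z * (s Z - 2 * Z * y Z + 4 * y Z * U Z) / (Z * s Z ^ 2) with hg_def
  -- u' = g on D
  have hu : ∀ Z ∈ D, HasDerivAt (fun W => -y W / s W) (g Z) Z := by
    intro Z hZ
    have h := ((hy Z hZ).neg).div (hsd Z hZ) (hs Z hZ)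
    refine h.congr_deriv ?_
    simp only [hg_def, Pi.neg_apply]
    field_simp [hs Z hZ, hX Z hZ]
    ring
  have hdu : ∀ Z ∈ D, deriv (fun W => -y W / s W) Z = g Z :=
    fun Z hZ => (hu Z hZ).deriv
  intro X hXD
  have hsX := hs X hXD
  have hXX := hX X hXD
  have hyX := hy0 X hXD
  have hM0 : X * s X ^ 2 ≠ 0 := mul_ne_zero hXX (pow_ne_zero 2 hsX)
  -- derivative of g at X
  have hN : HasDerivAt (fun Z => y Z * (s Z - 2 * Z * y Z + 4 * y Z * U Z))
      ((-2 * s X) * (s X - 2 * X * y X + 4 * y X * U X) +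
        y X * (((s X - 2 * X * y X + 4 * y X * U X) / X
          - (2 * y X + 2 * X * (-2 * s X)))
          + (4 * (-2 * s X) * U X + 4 * y X *
            ((U X - 4 * X * y X * U X / s X + 4 * y X * U X ^ 2 / s X) / X)))) X := by
    have h1 : HasDerivAt (fun Z => 2 * Z * y Z) (2 * y X + 2 * X * (-2 * s X)) X := by
      have := (((hasDerivAt_id X).const_mul 2)).mul (hy X hXD)
      refine this.congr_deriv ?_
      simp only [id_eq]
      ring
    have h2 : HasDerivAt (fun Z => 4 * y Z * U Z)
        (4 * (-2 * s X) * U X + 4 * y X *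
          ((U X - 4 * X * y X * U X / s X + 4 * y X * U X ^ 2 / s X) / X)) X := by
      have := ((hy X hXD).const_mul 4).mul (hU X hXD)
      exact this
    exact (hy X hXD).mul (((hsd X hXD).sub h1).add h2)
  have hM : HasDerivAt (fun Z => Z * s Z ^ 2)
      (s X ^ 2 + X * (2 * s X * ((s X - 2 * X * y X + 4 * y X * U X) / X))) X := by
    have := (hasDerivAt_id X).mul ((hsd X hXD).pow 2)
    refine this.congr_deriv ?_
    simp only [id_eq, Pi.pow_apply, Nat.cast_ofNat]
    field_simp
    ring
  have hg : HasDerivAt g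
      ((((-2 * s X) * (s X - 2 * X * y X + 4 * y X * U X) +
        y X * (((s X - 2 * X * y X + 4 * y X * U X) / X
          - (2 * y X + 2 * X * (-2 * s X)))
          + (4 * (-2 * s X) * U X + 4 * y X *
            ((U X - 4 * X * y X * U X / s X + 4 * y X * U X ^ 2 / s X) / X)))) *
        (X * s X ^ 2) -
        (y X * (s X - 2 * X * y X + 4 * y X * U X)) *
        (s X ^ 2 + X * (2 * s X * ((s X - 2 * X * y X + 4 * y X * U X) / X)))) /
        (X * s X ^ 2) ^ 2) X :=
    (hN.div hM hM0).const_add 2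
  -- deriv (deriv u) X = deriv g X
  have heq : deriv (fun W => -y W / s W) =ᶠ[nhds X] g :=
    Filter.eventuallyEq_of_mem (hD.mem_nhds hXD) hdu
  rw [heq.deriv_eq, hg.deriv, hdu X hXD]
  simp only [hg_def]
  have hys : -y X / s X ≠ 0 := div_ne_zero (neg_ne_zero.mpr hyX) hsX
  field_simp [hsX, hXX, hyX]
  ring_nf
end

section
/- Suppose u is an analytic solution near X = 0 of the Painlevé-III equation u″ = (u′)²/u − u′/X + 4/X + 4u³ − 4/u with u(0) = 0. Then necessarily u′(0) = 1 and u″(0) = 0, and if u‴(0) = ω then the fifth Taylor coefficient is determined: u⁗⁗(0)/5! coefficient satisfies u(X) = X + ω X³/3! + 40 X⁵/5! + O(X⁷). -/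
open Filter Asymptotics Topology FormalMultilinearSeries

/-- The derivative of a function analytic at a point of `ℂ` is analytic there. -/
lemma aux_analyticAt_deriv {f : ℂ → ℂ} {z : ℂ} (hf : AnalyticAt ℂ f z) :
    AnalyticAt ℂ (deriv f) z := by
  have h := hf.eventually_analyticAt
  rw [eventually_nhds_iff] at h
  obtain ⟨s, hs, hso, hsz⟩ := h
  exact (AnalyticOnNhd.deriv (fun y hy => hs y hy)) z hsz

/-- Iterated derivatives at the center are factorials times Taylor coefficients. -/
lemma aux_iteratedDeriv_eq {f : ℂ → ℂ} {p : FormalMultilinearSeries ℂ ℂ ℂ}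
    (hp : HasFPowerSeriesAt f p 0) (n : ℕ) :
    iteratedDeriv n f 0 = (n.factorial : ℂ) * p.coeff n := by
  obtain ⟨r, hr⟩ := hp
  have h := hr.factorial_smul (1 : ℂ) n
  rw [iteratedDeriv_eq_iteratedFDeriv, ← h, nsmul_eq_mul]
  rfl

/-- A polynomial of degree `< n` which is `O(Xⁿ)` near `0` has all coefficients zero. -/
lemma aux_extract : ∀ (n : ℕ) (c : ℕ → ℂ),
    ((fun X : ℂ => ∑ i ∈ Finset.range n, c i * X ^ i) =O[𝓝[≠] (0 : ℂ)] fun X => X ^ n) →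
    ∀ i < n, c i = 0 := by
  intro n
  induction n with
  | zero => intro c h i hi; omega
  | succ n ih =>
    intro c h
    have hc0 : c 0 = 0 := by
      have h1 : Tendsto (fun X : ℂ => ∑ i ∈ Finset.range (n + 1), c i * X ^ i)
          (𝓝[≠] (0 : ℂ)) (𝓝 (c 0)) := by
        have hcont : Tendsto (fun X : ℂ => ∑ i ∈ Finset.range (n + 1), c i * X ^ i)
            (𝓝 (0 : ℂ)) (𝓝 (∑ i ∈ Finset.range (n + 1), c i * (0 : ℂ) ^ i)) :=
          (Continuous.tendsto (continuous_finset_sum _ fun i _ => continuous_const.mul (continuous_pow i)) 0)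
        have hval : ∑ i ∈ Finset.range (n + 1), c i * (0 : ℂ) ^ i = c 0 := by
          rw [Finset.sum_range_succ']; simp
        rw [hval] at hcont
        exact hcont.mono_left nhdsWithin_le_nhds
      have h2 : Tendsto (fun X : ℂ => ∑ i ∈ Finset.range (n + 1), c i * X ^ i)
          (𝓝[≠] (0 : ℂ)) (𝓝 0) := by
        apply h.trans_tendsto
        have h3 : Tendsto (fun X : ℂ => X ^ (n + 1)) (𝓝 0) (𝓝 ((0 : ℂ) ^ (n + 1))) :=
          (continuous_pow (n + 1)).tendsto 0
        rw [zero_pow (Nat.succ_ne_zero n)] at h3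
        exact h3.mono_left nhdsWithin_le_nhds
      exact tendsto_nhds_unique h1 h2
    have h' : (fun X : ℂ => ∑ i ∈ Finset.range n, c (i + 1) * X ^ i) =O[𝓝[≠] (0 : ℂ)]
        fun X => X ^ n := by
      rw [isBigO_iff] at h ⊢
      obtain ⟨Cb, hC⟩ := h
      refine ⟨Cb, ?_⟩
      filter_upwards [hC, self_mem_nhdsWithin] with X hX hX0
      have hX0' : (X : ℂ) ≠ 0 := hX0
      have hsum : ∑ i ∈ Finset.range (n + 1), c i * X ^ i
          = X * ∑ i ∈ Finset.range n, c (i + 1) * X ^ i := by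
        rw [Finset.sum_range_succ', hc0, Finset.mul_sum]
        simp only [pow_zero, mul_one, zero_mul, add_zero]
        exact Finset.sum_congr rfl fun i _ => by ring
      rw [hsum, norm_mul] at hX
      have hXpos : 0 < ‖X‖ := norm_pos_iff.2 hX0'
      have hX' : ‖X‖ * ‖∑ i ∈ Finset.range n, c (i + 1) * X ^ i‖
          ≤ ‖X‖ * (Cb * ‖X ^ n‖) := by
        calc ‖X‖ * ‖∑ i ∈ Finset.range n, c (i + 1) * X ^ i‖ ≤ Cb * ‖X ^ (n + 1)‖ := hX
          _ = ‖X‖ * (Cb * ‖X ^ n‖) := by rw [pow_succ, norm_mul]; ring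
      exact le_of_mul_le_mul_left hX' hXpos
    intro i hi
    rcases i with _ | j
    · exact hc0
    · exact ih (fun i => c (i + 1)) h' j (by omega)

/-- Monotonicity of powers as big-O near zero. -/
lemma aux_pow_isBigO {m n : ℕ} (h : n ≤ m) :
    (fun X : ℂ => X ^ m) =O[𝓝 (0 : ℂ)] fun X => X ^ n := by
  have hm : m = n + (m - n) := by omega
  have heq : (fun X : ℂ => X ^ m) = fun X => X ^ n * X ^ (m - n) := by
    funext X; rw [← pow_add, ← hm]
  rw [heq]
  have h2 : (fun X : ℂ => X ^ (m - n)) =O[𝓝 (0 : ℂ)] (fun _ => (1 : ℂ)) :=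
    ((continuous_pow (m - n)).tendsto 0).isBigO_one ℂ
  exact ((isBigO_refl (fun X : ℂ => X ^ n) _).mul h2).congr'
    EventuallyEq.rfl (Eventually.of_forall fun X => by ring)

/-- An analytic solution `u` near `X = 0` of the Painlevé-III equation
`u″ = (u′)²/u − u′/X + 4/X + 4u³ − 4/u` with `u(0) = 0` necessarily has
`u′(0) = 1`, `u″(0) = 0`, and Taylor expansion `u(X) = X + ωX³/3! + 40X⁵/5! + O(X⁷)`
(i.e. the fifth derivative at 0 equals `40`). -/
theorem stmt9 (u : ℂ → ℂ) (hu : AnalyticAt ℂ u 0) (h0 : u 0 = 0)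
    (heq : ∀ᶠ X in nhdsWithin (0 : ℂ) {(0 : ℂ)}ᶜ,
      deriv (deriv u) X =
        (deriv u X) ^ 2 / u X - deriv u X / X + 4 / X + 4 * (u X) ^ 3 - 4 / u X) :
    deriv u 0 = 1 ∧ iteratedDeriv 2 u 0 = 0 ∧ iteratedDeriv 5 u 0 = 40 := by
  have hu1 : AnalyticAt ℂ (deriv u) 0 := aux_analyticAt_deriv hu
  have hu2 : AnalyticAt ℂ (deriv (deriv u)) 0 := aux_analyticAt_deriv hu1
  -- the cleared equation F = 0 near 0
  set F : ℂ → ℂ := fun X => X * u X * deriv (deriv u) X -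
      (X * (deriv u X) ^ 2 - u X * deriv u X + 4 * u X + 4 * X * (u X) ^ 4 - 4 * X)
    with hF_def
  have hFan : AnalyticAt ℂ F 0 := by
    apply AnalyticAt.sub
    · exact (analyticAt_id.mul hu).mul hu2
    · exact ((((analyticAt_id.mul (hu1.pow 2)).sub (hu.mul hu1)).add
        (analyticAt_const.mul hu)).add ((analyticAt_const.mul analyticAt_id).mul (hu.pow 4))).sub
        (analyticAt_const.mul analyticAt_id)
  have hFeq : ∀ᶠ X in 𝓝 (0 : ℂ), F X = 0 := by
    rw [← AnalyticAt.frequently_eq_iff_eventually_eq hFan analyticAt_const]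
    rcases hu.eventually_eq_zero_or_eventually_ne_zero with hz | hnz
    · exfalso
      have hz' : u =ᶠ[𝓝 (0 : ℂ)] fun _ => 0 := hz
      have hdz : deriv u =ᶠ[𝓝 (0 : ℂ)] deriv (fun _ => (0 : ℂ)) := hz'.deriv
      have hdz' : deriv u =ᶠ[𝓝 (0 : ℂ)] fun _ => 0 := by
        simpa [deriv_const] using hdz
      have hddz : deriv (deriv u) =ᶠ[𝓝 (0 : ℂ)] fun _ => 0 := by
        have h5 := hdz'.deriv
        simpa [deriv_const] using h5
      have hbad : ∀ᶠ X in 𝓝[≠] (0 : ℂ), False := by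
        filter_upwards [heq, hz'.filter_mono nhdsWithin_le_nhds,
          hdz'.filter_mono nhdsWithin_le_nhds, hddz.filter_mono nhdsWithin_le_nhds,
          self_mem_nhdsWithin] with X h1 h2 h3 h4 h5
        have hX : (X : ℂ) ≠ 0 := h5
        rw [h2, h3, h4] at h1
        simp only [zero_div, div_zero, mul_zero, zero_sub, sub_zero, zero_add,
          ne_eq, zero_pow, OfNat.ofNat_ne_zero, not_false_eq_true] at h1
        have h6 : (4 : ℂ) / X = 0 := by linear_combination -h1
        rw [div_eq_zero_iff] at h6
        rcases h6 with h | h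
        · norm_num at h
        · exact hX h
      obtain ⟨X, hX⟩ := hbad.exists
      exact hX
    · apply Filter.Eventually.frequently
      filter_upwards [heq, hnz, self_mem_nhdsWithin] with X h1 h2 h3
      have hX : (X : ℂ) ≠ 0 := h3
      simp only [hF_def]
      rw [h1]
      field_simp
      ring
  -- power series coefficients
  obtain ⟨p, hp⟩ := hu
  obtain ⟨q, hq⟩ := hu1
  obtain ⟨r, hr⟩ := hu2
  set a1 := p.coeff 1 with ha1_def
  set a2 := p.coeff 2 with ha2_def
  set a3 := p.coeff 3 with ha3_def
  set a4 := p.coeff 4 with ha4_def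
  set a5 := p.coeff 5 with ha5_def
  have ha0 : p.coeff 0 = 0 := by
    have h00 : iteratedDeriv 0 u 0 = ((Nat.factorial 0 : ℕ) : ℂ) * p.coeff 0 := aux_iteratedDeriv_eq hp 0
    simp [iteratedDeriv_zero, h0] at h00
    exact h00.symm
  have hqc : ∀ n : ℕ, ((n.factorial : ℕ) : ℂ) * q.coeff n = (((n+1).factorial : ℕ) : ℂ) * p.coeff (n + 1) := by
    intro n
    rw [← aux_iteratedDeriv_eq hq n, ← aux_iteratedDeriv_eq hp (n + 1), iteratedDeriv_succ']
  have hrc : ∀ n : ℕ, ((n.factorial : ℕ) : ℂ) * r.coeff n = (((n+2).factorial : ℕ) : ℂ) * p.coeff (n + 2) := by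
    intro n
    have h1 : iteratedDeriv n (deriv (deriv u)) 0 = ((n.factorial : ℕ) : ℂ) * r.coeff n :=
      aux_iteratedDeriv_eq hr n
    have h2 : iteratedDeriv (n + 2) u 0 = (((n+2).factorial : ℕ) : ℂ) * p.coeff (n + 2) :=
      aux_iteratedDeriv_eq hp (n + 2)
    rw [← h1, ← h2, iteratedDeriv_succ', iteratedDeriv_succ']
  -- coefficients of deriv u
  have hb0 : q.coeff 0 = a1 := by
    have h := hqc 0; norm_num [Nat.factorial] at h; linear_combination h
  have hb1 : q.coeff 1 = 2 * a2 := by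
    have h := hqc 1; norm_num [Nat.factorial] at h; linear_combination h
  have hb2 : q.coeff 2 = 3 * a3 := by
    have h := hqc 2; norm_num [Nat.factorial] at h; linear_combination h / 2
  have hb3 : q.coeff 3 = 4 * a4 := by
    have h := hqc 3; norm_num [Nat.factorial] at h; linear_combination h / 6
  have hb4 : q.coeff 4 = 5 * a5 := by
    have h := hqc 4; norm_num [Nat.factorial] at h; linear_combination h / 24
  -- coefficients of deriv (deriv u)
  have hc0 : r.coeff 0 = 2 * a2 := by
    have h := hrc 0; norm_num [Nat.factorial] at h; linear_combination h
  have hc1 : r.coeff 1 = 6 * a3 := by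
    have h := hrc 1; norm_num [Nat.factorial] at h; linear_combination h
  have hc2 : r.coeff 2 = 12 * a4 := by
    have h := hrc 2; norm_num [Nat.factorial] at h; linear_combination h / 2
  have hc3 : r.coeff 3 = 20 * a5 := by
    have h := hrc 3; norm_num [Nat.factorial] at h; linear_combination h / 6
  -- Taylor remainders
  set A : ℂ → ℂ := fun X => a1 * X + a2 * X ^ 2 + a3 * X ^ 3 + a4 * X ^ 4 + a5 * X ^ 5
    with hA_def
  set B : ℂ → ℂ := fun X => a1 + 2 * a2 * X + 3 * a3 * X ^ 2 + 4 * a4 * X ^ 3 + 5 * a5 * X ^ 4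
    with hB_def
  set C : ℂ → ℂ := fun X => 2 * a2 + 6 * a3 * X + 12 * a4 * X ^ 2 + 20 * a5 * X ^ 3
    with hC_def
  have eA : (fun X : ℂ => u X - A X) =O[𝓝 (0 : ℂ)] fun X => X ^ 6 := by
    have H := hp.isBigO_sub_partialSum_pow 6
    have H2 : (fun X : ℂ => u X - A X) = fun y => u (0 + y) - p.partialSum 6 y := by
      funext y
      simp only [FormalMultilinearSeries.partialSum, Finset.sum_range_succ,
        Finset.sum_range_zero, FormalMultilinearSeries.apply_eq_pow_smul_coeff, smul_eq_mul,
        zero_add, hA_def]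
      rw [ha0]
      ring
    rw [H2]
    simp only [← norm_pow] at H
    exact isBigO_norm_right.mp H
  have eB : (fun X : ℂ => deriv u X - B X) =O[𝓝 (0 : ℂ)] fun X => X ^ 5 := by
    have H := hq.isBigO_sub_partialSum_pow 5
    have H2 : (fun X : ℂ => deriv u X - B X) = fun y => deriv u (0 + y) - q.partialSum 5 y := by
      funext y
      simp only [FormalMultilinearSeries.partialSum, Finset.sum_range_succ,
        Finset.sum_range_zero, FormalMultilinearSeries.apply_eq_pow_smul_coeff, smul_eq_mul,
        zero_add, hB_def]
      rw [hb0, hb1, hb2, hb3, hb4]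
      ring
    rw [H2]
    simp only [← norm_pow] at H
    exact isBigO_norm_right.mp H
  have eC : (fun X : ℂ => deriv (deriv u) X - C X) =O[𝓝 (0 : ℂ)] fun X => X ^ 4 := by
    have H := hr.isBigO_sub_partialSum_pow 4
    have H2 : (fun X : ℂ => deriv (deriv u) X - C X)
        = fun y => deriv (deriv u) (0 + y) - r.partialSum 4 y := by
      funext y
      simp only [FormalMultilinearSeries.partialSum, Finset.sum_range_succ,
        Finset.sum_range_zero, FormalMultilinearSeries.apply_eq_pow_smul_coeff, smul_eq_mul,
        zero_add, hC_def]
      rw [hc0, hc1, hc2, hc3]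
      ring
    rw [H2]
    simp only [← norm_pow] at H
    exact isBigO_norm_right.mp H
  -- basic O(1) and O(X) facts
  have oX : (fun X : ℂ => X) =O[𝓝 (0 : ℂ)] fun X : ℂ => X := isBigO_refl _ _
  have one1 : ∀ {f : ℂ → ℂ}, ContinuousAt f 0 → (f =O[𝓝 (0 : ℂ)] fun _ => (1 : ℂ)) :=
    fun hf => hf.isBigO_one ℂ
  have odu : deriv u =O[𝓝 (0 : ℂ)] fun _ => (1 : ℂ) := one1 hq.continuousAt
  have oB1 : B =O[𝓝 (0 : ℂ)] fun _ => (1 : ℂ) := one1 (by fun_prop)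
  have oC1 : C =O[𝓝 (0 : ℂ)] fun _ => (1 : ℂ) := one1 (by fun_prop)
  -- u = O(X)
  have ouX : u =O[𝓝 (0 : ℂ)] fun X : ℂ => X := by
    have h1 : (fun X : ℂ => u X - A X) =O[𝓝 (0 : ℂ)] fun X : ℂ => X ^ 1 :=
      eA.trans (aux_pow_isBigO (by norm_num))
    have h2 : A =O[𝓝 (0 : ℂ)] fun X : ℂ => X :=
      (oX.mul (one1 (f := fun X : ℂ => a1 + a2 * X + a3 * X ^ 2 + a4 * X ^ 3 + a5 * X ^ 4)
        (by fun_prop))).congr'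
        (Eventually.of_forall fun X => by simp only [hA_def]; ring)
        (Eventually.of_forall fun X => by ring)
    have h3 := (h1.congr' EventuallyEq.rfl (Eventually.of_forall fun X => pow_one X)).add h2
    exact h3.congr' (Eventually.of_forall fun X => by ring) EventuallyEq.rfl
  -- u - a1 • X = O(X²)
  have ou2 : (fun X : ℂ => u X - a1 * X) =O[𝓝 (0 : ℂ)] fun X : ℂ => X ^ 2 := by
    have h1 : (fun X : ℂ => u X - A X) =O[𝓝 (0 : ℂ)] fun X : ℂ => X ^ 2 :=
      eA.trans (aux_pow_isBigO (by norm_num))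
    have h2 : (fun X : ℂ => A X - a1 * X) =O[𝓝 (0 : ℂ)] fun X : ℂ => X ^ 2 :=
      ((isBigO_refl (fun X : ℂ => X ^ 2) _).mul
        (one1 (f := fun X : ℂ => a2 + a3 * X + a4 * X ^ 2 + a5 * X ^ 3) (by fun_prop))).congr'
        (Eventually.of_forall fun X => by simp only [hA_def]; ring)
        (Eventually.of_forall fun X => by ring)
    have h3 := h1.add h2
    exact h3.congr' (Eventually.of_forall fun X => by ring) EventuallyEq.rfl
  -- the polynomial Q
  set Q : ℂ → ℂ := fun X => X * A X * C X -
      (X * (B X) ^ 2 - A X * B X + 4 * A X + 4 * X * (a1 * X) ^ 4 - 4 * X)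
    with hQ_def
  -- F - Q = sum of error terms, each O(X⁶)
  have hFQ : (fun X : ℂ => F X - Q X) =O[𝓝 (0 : ℂ)] fun X : ℂ => X ^ 6 := by
    have t1 : (fun X : ℂ => X * (u X * (deriv (deriv u) X - C X)))
        =O[𝓝 (0 : ℂ)] fun X : ℂ => X ^ 6 :=
      (oX.mul (ouX.mul eC)).congr' EventuallyEq.rfl (Eventually.of_forall fun X => by ring)
    have t2 : (fun X : ℂ => X * ((u X - A X) * C X))
        =O[𝓝 (0 : ℂ)] fun X : ℂ => X ^ 6 := by
      have := (oX.mul (eA.mul oC1)).congr' EventuallyEq.rfl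
        (Eventually.of_forall (fun X : ℂ => by show X * (X ^ 6 * 1) = X ^ 7; ring))
      exact this.trans (aux_pow_isBigO (by norm_num))
    have t3 : (fun X : ℂ => X * ((deriv u X + B X) * (deriv u X - B X)))
        =O[𝓝 (0 : ℂ)] fun X : ℂ => X ^ 6 :=
      (oX.mul ((odu.add oB1).mul eB)).congr' EventuallyEq.rfl
        (Eventually.of_forall fun X => by
          show X * (1 * X ^ 5) = X ^ 6; ring)
    have t4 : (fun X : ℂ => u X * (deriv u X - B X) + (u X - A X) * B X)
        =O[𝓝 (0 : ℂ)] fun X : ℂ => X ^ 6 := by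
      have h41 : (fun X : ℂ => u X * (deriv u X - B X)) =O[𝓝 (0 : ℂ)] fun X : ℂ => X ^ 6 :=
        (ouX.mul eB).congr' EventuallyEq.rfl (Eventually.of_forall fun X => by ring)
      have h42 : (fun X : ℂ => (u X - A X) * B X) =O[𝓝 (0 : ℂ)] fun X : ℂ => X ^ 6 :=
        (eA.mul oB1).congr' EventuallyEq.rfl (Eventually.of_forall fun X => by ring)
      exact h41.add h42
    have t5 : (fun X : ℂ => 4 * (u X - A X)) =O[𝓝 (0 : ℂ)] fun X : ℂ => X ^ 6 :=
      eA.const_mul_left 4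
    have t6 : (fun X : ℂ => 4 * (X * ((u X - a1 * X) *
        (u X ^ 3 + u X ^ 2 * (a1 * X) + u X * (a1 * X) ^ 2 + (a1 * X) ^ 3))))
        =O[𝓝 (0 : ℂ)] fun X : ℂ => X ^ 6 := by
      have ha1X : (fun X : ℂ => a1 * X) =O[𝓝 (0 : ℂ)] fun X : ℂ => X := oX.const_mul_left a1
      have hcub : (fun X : ℂ => u X ^ 3 + u X ^ 2 * (a1 * X) + u X * (a1 * X) ^ 2 + (a1 * X) ^ 3)
          =O[𝓝 (0 : ℂ)] fun X : ℂ => X ^ 3 := by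
        have c1 : (fun X : ℂ => u X ^ 3) =O[𝓝 (0 : ℂ)] fun X : ℂ => X ^ 3 := ouX.pow 3
        have c2 : (fun X : ℂ => u X ^ 2 * (a1 * X)) =O[𝓝 (0 : ℂ)] fun X : ℂ => X ^ 3 :=
          ((ouX.pow 2).mul ha1X).congr' EventuallyEq.rfl
            (Eventually.of_forall fun X => by ring)
        have c3 : (fun X : ℂ => u X * (a1 * X) ^ 2) =O[𝓝 (0 : ℂ)] fun X : ℂ => X ^ 3 :=
          (ouX.mul (ha1X.pow 2)).congr' EventuallyEq.rfl
            (Eventually.of_forall fun X => by ring)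
        have c4 : (fun X : ℂ => (a1 * X) ^ 3) =O[𝓝 (0 : ℂ)] fun X : ℂ => X ^ 3 := ha1X.pow 3
        exact ((c1.add c2).add c3).add c4
      exact ((oX.mul (ou2.mul hcub)).congr' EventuallyEq.rfl
        (Eventually.of_forall fun X => by
          show X * (X ^ 2 * X ^ 3) = X ^ 6; ring)).const_mul_left 4
    have key : (fun X : ℂ => F X - Q X) = fun X : ℂ =>
        X * (u X * (deriv (deriv u) X - C X)) + X * ((u X - A X) * C X)
        - X * ((deriv u X + B X) * (deriv u X - B X))
        + (u X * (deriv u X - B X) + (u X - A X) * B X)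
        - 4 * (u X - A X)
        - 4 * (X * ((u X - a1 * X) *
            (u X ^ 3 + u X ^ 2 * (a1 * X) + u X * (a1 * X) ^ 2 + (a1 * X) ^ 3))) := by
      funext X
      simp only [hF_def, hQ_def, hA_def, hB_def, hC_def]
      ring
    rw [key]
    exact ((((t1.add t2).sub t3).add t4).sub t5).sub t6
  -- Q itself is O(X⁶)
  have hQO : Q =O[𝓝 (0 : ℂ)] fun X : ℂ => X ^ 6 := by
    have hFO : F =O[𝓝 (0 : ℂ)] fun X : ℂ => X ^ 6 := by
      have hFe : F =ᶠ[𝓝 (0 : ℂ)] (fun _ => (0 : ℂ)) := hFeq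
      exact hFe.trans_isBigO (isBigO_zero _ _)
    have hQ' : Q = fun X => F X - (F X - Q X) := funext fun X => by ring
    rw [hQ']
    exact hFO.sub hFQ
  -- extract the coefficients
  set cf : ℕ → ℂ := fun i =>
    if i = 1 then 4 - 4 * a1
    else if i = 2 then a1 * a2 - 4 * a2
    else if i = 3 then 4 * a1 * a3 - 4 * a3
    else if i = 4 then a2 * a3 + 9 * a1 * a4 - 4 * a4
    else if i = 5 then 4 * a2 * a4 + 16 * a1 * a5 - 4 * a1 ^ 4 - 4 * a5
    else 0
    with hcf_def
  have hS : (fun X : ℂ => ∑ i ∈ Finset.range 6, cf i * X ^ i) =O[𝓝[≠] (0 : ℂ)]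
      fun X => X ^ 6 := by
    have hRid : ∀ X : ℂ, (∑ i ∈ Finset.range 6, cf i * X ^ i)
        = Q X - X ^ 6 * (a3 * a4 + 9 * a2 * a5 + 4 * a3 * a5 * X + a4 * a5 * X ^ 2) := by
      intro X
      simp only [Finset.sum_range_succ, Finset.sum_range_zero, hcf_def, hQ_def, hA_def,
        hB_def, hC_def]
      norm_num
      ring
    have hrem : (fun X : ℂ => X ^ 6 * (a3 * a4 + 9 * a2 * a5 + 4 * a3 * a5 * X + a4 * a5 * X ^ 2))
        =O[𝓝 (0 : ℂ)] fun X : ℂ => X ^ 6 :=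
      ((isBigO_refl (fun X : ℂ => X ^ 6) _).mul
        (one1 (f := fun X : ℂ => a3 * a4 + 9 * a2 * a5 + 4 * a3 * a5 * X + a4 * a5 * X ^ 2)
          (by fun_prop))).congr' EventuallyEq.rfl (Eventually.of_forall fun X => by ring)
    have := (hQO.sub hrem).congr' (Eventually.of_forall fun X => (hRid X).symm) EventuallyEq.rfl
    exact this.mono nhdsWithin_le_nhds
  have hco := aux_extract 6 cf hS
  have E1 : 4 - 4 * a1 = 0 := by have h := hco 1 (by norm_num); simpa [hcf_def] using h
  have E2 : a1 * a2 - 4 * a2 = 0 := by have h := hco 2 (by norm_num); simpa [hcf_def] using h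
  have E4 : a2 * a3 + 9 * a1 * a4 - 4 * a4 = 0 := by
    have h := hco 4 (by norm_num); simpa [hcf_def] using h
  have E5 : 4 * a2 * a4 + 16 * a1 * a5 - 4 * a1 ^ 4 - 4 * a5 = 0 := by
    have h := hco 5 (by norm_num); simpa [hcf_def] using h
  -- solve the equations
  have ea1 : a1 = 1 := by linear_combination -E1 / 4
  have ea2 : a2 = 0 := by rw [ea1] at E2; linear_combination -E2 / 3
  have ea4 : a4 = 0 := by rw [ea1, ea2] at E4; linear_combination E4 / 5
  have ea5 : a5 = 1 / 3 := by rw [ea1, ea2] at E5; linear_combination E5 / 12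
  refine ⟨?_, ?_, ?_⟩
  · have h := aux_iteratedDeriv_eq hp 1
    rw [iteratedDeriv_one] at h
    rw [h, ← ha1_def, ea1]
    norm_num [Nat.factorial]
  · have h := aux_iteratedDeriv_eq hp 2
    rw [h, ← ha2_def, ea2]
    norm_num
  · have h := aux_iteratedDeriv_eq hp 5
    rw [h, ← ha5_def, ea5]
    norm_num [Nat.factorial]
end

section
/- (Uniqueness of causal solutions on a small rectangle.) Let (q⁽¹⁾,P⁽¹⁾,D⁽¹⁾) and (q⁽²⁾,P⁽²⁾,D⁽²⁾) be two C¹ solutions of the Maxwell–Bloch system q_z = −P, P_t = −2qD, D_t = 2Re(conj(q)P) on a rectangle [t₀,t₁]×[z₀,z₁] ⊂ [0,∞)², each satisfying the a priori bounds |P⁽ʲ⁾| ≤ 1, |D⁽ʲ⁾| ≤ 1, |q⁽ʲ⁾(t,z)| ≤ |q₀(t)| + z for a fixed q₀ ∈ L¹. Suppose q⁽¹⁾(t,z₀) = q⁽²⁾(t,z₀) for t ∈ [t₀,t₁], and P⁽¹⁾(t₀,z) = P⁽²⁾(t₀,z), D⁽¹⁾(t₀,z) = D⁽²⁾(t₀,z)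 for z ∈ [z₀,z₁]. If (z₁−z₀) + 4(t₁−t₀) + 4[∫_{t₀}^{t₁}|q₀(τ)|dτ + z₁(t₁−t₀)] < 1, then the two solutions coincide on all of [t₀,t₁]×[z₀,z₁]. -/
open MeasureTheory Set

lemma sliceCont {E : Type*} [TopologicalSpace E] {t₀ t₁ z₀ z₁ z : ℝ} {f : ℝ → ℝ → E}
    (hf : ContinuousOn (fun p : ℝ × ℝ => f p.1 p.2) (Set.Icc t₀ t₁ ×ˢ Set.Icc z₀ z₁))
    (hz : z ∈ Set.Icc z₀ z₁) : ContinuousOn (fun τ => f τ z) (Set.Icc t₀ t₁) :=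
  hf.comp (Continuous.continuousOn (by continuity)) (fun τ hτ => Set.mk_mem_prod hτ hz)

lemma ftc_bound {E : Type*} [NormedAddCommGroup E] [NormedSpace ℝ E] [CompleteSpace E]
    {t₀ t₁ : ℝ} (ht : t₀ ≤ t₁) {f f' : ℝ → E} {g : ℝ → ℝ}
    (hf0 : f t₀ = 0)
    (hfc : ContinuousOn f (Set.Icc t₀ t₁))
    (hderiv : ∀ x ∈ Set.Icc t₀ t₁, HasDerivWithinAt f (f' x) (Set.Icc t₀ t₁) x)
    (hf'c : ContinuousOn f' (Set.Icc t₀ t₁))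
    (hg : IntervalIntegrable g MeasureTheory.volume t₀ t₁) (hg0 : ∀ τ, 0 ≤ g τ)
    {a b : ℝ} (ha : 0 ≤ a) (hb : 0 ≤ b)
    (hbound : ∀ τ ∈ Set.Icc t₀ t₁, ‖f' τ‖ ≤ a + b * g τ)
    {t : ℝ} (htm : t ∈ Set.Icc t₀ t₁) :
    ‖f t‖ ≤ a * (t₁ - t₀) + b * ∫ τ in t₀..t₁, g τ := by
  have ht0t : t₀ ≤ t := htm.1
  have hsub : Set.Icc t₀ t ⊆ Set.Icc t₀ t₁ := Set.Icc_subset_Icc le_rfl htm.2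
  have hgt : IntervalIntegrable g MeasureTheory.volume t₀ t :=
    hg.mono_set (by rw [Set.uIcc_of_le ht0t, Set.uIcc_of_le ht]; exact hsub)
  have hftc : ∫ τ in t₀..t, f' τ = f t - f t₀ :=
    intervalIntegral.integral_eq_sub_of_hasDeriv_right_of_le ht0t (hfc.mono hsub)
      (fun x hx =>
        ((hderiv x ⟨hx.1.le, hx.2.le.trans htm.2⟩).hasDerivAt
          (Icc_mem_nhds hx.1 (hx.2.trans_le htm.2))).hasDerivWithinAt)
      ((hf'c.mono hsub).intervalIntegrable_of_Icc ht0t)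
  rw [hf0, sub_zero] at hftc
  calc ‖f t‖ = ‖∫ τ in t₀..t, f' τ‖ := by rw [hftc]
    _ ≤ ∫ τ in t₀..t, ‖f' τ‖ := intervalIntegral.norm_integral_le_integral_norm ht0t
    _ ≤ ∫ τ in t₀..t, (a + b * g τ) := by
        apply intervalIntegral.integral_mono_on ht0t
          (((hf'c.mono hsub).norm).intervalIntegrable_of_Icc ht0t)
          (intervalIntegrable_const.add (hgt.const_mul b))
          (fun x hx => hbound x (hsub hx))
    _ ≤ ∫ τ in t₀..t₁, (a + b * g τ) := by
        apply intervalIntegral.integral_mono_interval le_rfl ht0t htm.2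
          (Filter.Eventually.of_forall fun τ => add_nonneg ha (mul_nonneg hb (hg0 τ)))
          (intervalIntegrable_const.add (hg.const_mul b))
    _ = a * (t₁ - t₀) + b * ∫ τ in t₀..t₁, g τ := by
        rw [intervalIntegral.integral_add intervalIntegrable_const (hg.const_mul b),
          intervalIntegral.integral_const, intervalIntegral.integral_const_mul]
        simp [smul_eq_mul]; ring


/-- `(q, P, D)` is a C¹ solution of the Maxwell–Bloch system
`q_z = −P`, `P_t = −2qD`, `D_t = 2Re(conj(q)·P)` on the rectangle
`[t₀,t₁] × [z₀,z₁]`. -/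
def MBSolOn (t₀ t₁ z₀ z₁ : ℝ) (q P : ℝ → ℝ → ℂ) (D : ℝ → ℝ → ℝ) : Prop :=
  ContinuousOn (fun p : ℝ × ℝ => q p.1 p.2) (Set.Icc t₀ t₁ ×ˢ Set.Icc z₀ z₁) ∧
  ContinuousOn (fun p : ℝ × ℝ => P p.1 p.2) (Set.Icc t₀ t₁ ×ˢ Set.Icc z₀ z₁) ∧
  ContinuousOn (fun p : ℝ × ℝ => D p.1 p.2) (Set.Icc t₀ t₁ ×ˢ Set.Icc z₀ z₁) ∧
  (∀ t ∈ Set.Icc t₀ t₁, ∀ z ∈ Set.Icc z₀ z₁,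
    HasDerivWithinAt (fun z' => q t z') (-(P t z)) (Set.Icc z₀ z₁) z ∧
    HasDerivWithinAt (fun t' => P t' z) (-2 * q t z * (D t z : ℂ)) (Set.Icc t₀ t₁) t ∧
    HasDerivWithinAt (fun t' => D t' z) (2 * ((starRingEnd ℂ) (q t z) * P t z).re)
      (Set.Icc t₀ t₁) t)

set_option maxHeartbeats 1000000 in
/-- Uniqueness of causal solutions on a small rectangle: two solutions of the
Maxwell–Bloch system with the a priori bounds `|P| ≤ 1`, `|D| ≤ 1`,
`|q(t,z)| ≤ |q₀(t)| + z`, agreeing on the edges `z = z₀` (for `q`) and `t = t₀`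
(for `P` and `D`), coincide on the whole rectangle provided
`(z₁−z₀) + 4(t₁−t₀) + 4[∫_{t₀}^{t₁}|q₀| + z₁(t₁−t₀)] < 1`. -/
theorem stmt19
    (t₀ t₁ z₀ z₁ : ℝ) (ht0 : 0 ≤ t₀) (ht : t₀ < t₁) (hz0 : 0 ≤ z₀) (hz : z₀ < z₁)
    (q₀ : ℝ → ℂ) (hq₀ : Integrable q₀)
    (q1 P1 : ℝ → ℝ → ℂ) (D1 : ℝ → ℝ → ℝ) (q2 P2 : ℝ → ℝ → ℂ) (D2 : ℝ → ℝ → ℝ)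
    (hsol1 : MBSolOn t₀ t₁ z₀ z₁ q1 P1 D1) (hsol2 : MBSolOn t₀ t₁ z₀ z₁ q2 P2 D2)
    (hbd1 : ∀ t ∈ Icc t₀ t₁, ∀ z ∈ Icc z₀ z₁,
      ‖P1 t z‖ ≤ 1 ∧ |D1 t z| ≤ 1 ∧
        ‖q1 t z‖ ≤ ‖q₀ t‖ + z)
    (hbd2 : ∀ t ∈ Icc t₀ t₁, ∀ z ∈ Icc z₀ z₁,
      ‖P2 t z‖ ≤ 1 ∧ |D2 t z| ≤ 1 ∧
        ‖q2 t z‖ ≤ ‖q₀ t‖ + z)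
    (hq_edge : ∀ t ∈ Icc t₀ t₁, q1 t z₀ = q2 t z₀)
    (hPD_edge : ∀ z ∈ Icc z₀ z₁, P1 t₀ z = P2 t₀ z ∧ D1 t₀ z = D2 t₀ z)
    (hsmall : (z₁ - z₀) + 4 * (t₁ - t₀) +
        4 * ((∫ τ in t₀..t₁, ‖q₀ τ‖) + z₁ * (t₁ - t₀)) < 1) :
    ∀ t ∈ Icc t₀ t₁, ∀ z ∈ Icc z₀ z₁,
      q1 t z = q2 t z ∧ P1 t z = P2 t z ∧ D1 t z = D2 t z := by
  obtain ⟨hq1c, hP1c, hD1c, hode1⟩ := hsol1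
  obtain ⟨hq2c, hP2c, hD2c, hode2⟩ := hsol2
  set K := Set.Icc t₀ t₁ ×ˢ Set.Icc z₀ z₁ with hKdef
  have hK : IsCompact K := isCompact_Icc.prod isCompact_Icc
  have hKne : K.Nonempty := ⟨(t₀, z₀), Set.mk_mem_prod ⟨le_rfl, ht.le⟩ ⟨le_rfl, hz.le⟩⟩
  obtain ⟨pq, hpqK, hpq⟩ := hK.exists_isMaxOn hKne ((hq1c.sub hq2c).norm)
  obtain ⟨pP, hpPK, hpP⟩ := hK.exists_isMaxOn hKne ((hP1c.sub hP2c).norm)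
  obtain ⟨pD, hpDK, hpD⟩ := hK.exists_isMaxOn hKne ((hD1c.sub hD2c).norm)
  set Sq := ‖q1 pq.1 pq.2 - q2 pq.1 pq.2‖ with hSq
  set SP := ‖P1 pP.1 pP.2 - P2 pP.1 pP.2‖ with hSP
  set SD := ‖D1 pD.1 pD.2 - D2 pD.1 pD.2‖ with hSD
  have hq_le : ∀ t' ∈ Icc t₀ t₁, ∀ z' ∈ Icc z₀ z₁, ‖q1 t' z' - q2 t' z'‖ ≤ Sq :=
    fun t' ht' z' hz' => isMaxOn_iff.mp hpq (t', z') (Set.mk_mem_prod ht' hz')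
  have hP_le : ∀ t' ∈ Icc t₀ t₁, ∀ z' ∈ Icc z₀ z₁, ‖P1 t' z' - P2 t' z'‖ ≤ SP :=
    fun t' ht' z' hz' => isMaxOn_iff.mp hpP (t', z') (Set.mk_mem_prod ht' hz')
  have hD_le : ∀ t' ∈ Icc t₀ t₁, ∀ z' ∈ Icc z₀ z₁, ‖D1 t' z' - D2 t' z'‖ ≤ SD :=
    fun t' ht' z' hz' => isMaxOn_iff.mp hpD (t', z') (Set.mk_mem_prod ht' hz')
  have hSqnn : 0 ≤ Sq := norm_nonneg _
  have hSPnn : 0 ≤ SP := norm_nonneg _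
  have hSDnn : 0 ≤ SD := norm_nonneg _
  have hz₁ : 0 ≤ z₁ := hz0.trans hz.le
  set I := ∫ τ in t₀..t₁, ‖q₀ τ‖ with hI
  set M := I + z₁ * (t₁ - t₀) with hM
  have hqInt : IntervalIntegrable (fun τ => ‖q₀ τ‖) volume t₀ t₁ :=
    hq₀.norm.intervalIntegrable
  have hIeq : I = ∫ τ in t₀..t₁, ‖q₀ τ‖ := by
    rw [hI]
  have hInn : 0 ≤ I := by
    rw [hIeq]
    exact intervalIntegral.integral_nonneg ht.le fun τ _ => norm_nonneg _
  have hMnn : 0 ≤ M := add_nonneg hInn (mul_nonneg hz₁ (by linarith))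
  -- estimate for q
  have Hq : ∀ t ∈ Icc t₀ t₁, ∀ z ∈ Icc z₀ z₁, ‖q1 t z - q2 t z‖ ≤ (z₁ - z₀) * SP := by
    intro t htm z hzm
    have key := Convex.norm_image_sub_le_of_norm_hasDerivWithin_le
      (f := fun z' => q1 t z' - q2 t z') (f' := fun z' => -(P1 t z') - -(P2 t z'))
      (s := Set.Icc z₀ z₁) (C := SP)
      (fun x hx => ((hode1 t htm x hx).1).sub ((hode2 t htm x hx).1))
      (fun x hx => by
        show ‖-(P1 t x) - -(P2 t x)‖ ≤ SP
        have h : -(P1 t x) - -(P2 t x) = -(P1 t x - P2 t x) := by ring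
        rw [h, norm_neg]
        exact hP_le t htm x hx)
      (convex_Icc _ _) (Set.left_mem_Icc.mpr hz.le) hzm
    have key' : ‖(q1 t z - q2 t z) - (q1 t z₀ - q2 t z₀)‖ ≤ SP * ‖z - z₀‖ := key
    have hz0eq : q1 t z₀ - q2 t z₀ = 0 := by rw [hq_edge t htm]; exact sub_self _
    rw [hz0eq, sub_zero] at key'
    have hnz : ‖z - z₀‖ ≤ z₁ - z₀ := by
      rw [Real.norm_eq_abs, abs_of_nonneg (by linarith [hzm.1])]
      linarith [hzm.2]
    calc ‖q1 t z - q2 t z‖ ≤ SP * ‖z - z₀‖ := key'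
      _ ≤ SP * (z₁ - z₀) := by nlinarith [norm_nonneg (z - z₀)]
      _ = (z₁ - z₀) * SP := mul_comm _ _
  -- estimate for P
  have HP : ∀ t ∈ Icc t₀ t₁, ∀ z ∈ Icc z₀ z₁,
      ‖P1 t z - P2 t z‖ ≤ 2 * (t₁ - t₀) * Sq + 2 * M * SD := by
    intro t htm z hzm
    have hf0 : P1 t₀ z - P2 t₀ z = 0 := by rw [(hPD_edge z hzm).1]; exact sub_self _
    have hfc : ContinuousOn (fun τ => P1 τ z - P2 τ z) (Set.Icc t₀ t₁) :=
      (sliceCont hP1c hzm).sub (sliceCont hP2c hzm)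
    have hf'c : ContinuousOn
        (fun τ => -2 * q1 τ z * (D1 τ z : ℂ) - -2 * q2 τ z * (D2 τ z : ℂ))
        (Set.Icc t₀ t₁) := by
      apply ContinuousOn.sub
      · exact (continuousOn_const.mul (sliceCont hq1c hzm)).mul
          (Complex.continuous_ofReal.comp_continuousOn (sliceCont hD1c hzm))
      · exact (continuousOn_const.mul (sliceCont hq2c hzm)).mul
          (Complex.continuous_ofReal.comp_continuousOn (sliceCont hD2c hzm))
    have hderiv : ∀ x ∈ Set.Icc t₀ t₁, HasDerivWithinAt (fun τ => P1 τ z - P2 τ z)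
        (-2 * q1 x z * (D1 x z : ℂ) - -2 * q2 x z * (D2 x z : ℂ)) (Set.Icc t₀ t₁) x :=
      fun x hx => ((hode1 x hx z hzm).2.1).sub ((hode2 x hx z hzm).2.1)
    have hbound : ∀ τ ∈ Set.Icc t₀ t₁,
        ‖-2 * q1 τ z * (D1 τ z : ℂ) - -2 * q2 τ z * (D2 τ z : ℂ)‖
          ≤ (2 * Sq + 2 * z₁ * SD) + (2 * SD) * ‖q₀ τ‖ := by
      intro τ hτ
      have h1 : ‖q1 τ z - q2 τ z‖ ≤ Sq := hq_le τ hτ z hzm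
      have h2 : ‖D1 τ z - D2 τ z‖ ≤ SD := hD_le τ hτ z hzm
      have h3 : ‖q2 τ z‖ ≤ ‖q₀ τ‖ + z := by
        exact (hbd2 τ hτ z hzm).2.2
      have h4 : ‖D1 τ z‖ ≤ 1 := by rw [Real.norm_eq_abs]; exact (hbd1 τ hτ z hzm).2.1
      have heq : -2 * q1 τ z * (D1 τ z : ℂ) - -2 * q2 τ z * (D2 τ z : ℂ)
          = -2 * ((q1 τ z - q2 τ z) * (D1 τ z : ℂ)
              + q2 τ z * (((D1 τ z - D2 τ z : ℝ)) : ℂ)) := by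
        push_cast; ring
      rw [heq, norm_mul]
      have hn2 : ‖(-2 : ℂ)‖ = 2 := by norm_num
      rw [hn2]
      have hD1n : ‖(D1 τ z : ℂ)‖ = ‖D1 τ z‖ := Complex.norm_real _
      have hDDn : ‖(((D1 τ z - D2 τ z : ℝ)) : ℂ)‖ = ‖D1 τ z - D2 τ z‖ := Complex.norm_real _
      have hle : ‖(q1 τ z - q2 τ z) * (D1 τ z : ℂ)
            + q2 τ z * (((D1 τ z - D2 τ z : ℝ)) : ℂ)‖
          ≤ Sq * 1 + (‖q₀ τ‖ + z₁) * SD := by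
        calc ‖_ + _‖ ≤ ‖(q1 τ z - q2 τ z) * (D1 τ z : ℂ)‖
              + ‖q2 τ z * (((D1 τ z - D2 τ z : ℝ)) : ℂ)‖ := norm_add_le _ _
          _ = ‖q1 τ z - q2 τ z‖ * ‖D1 τ z‖ + ‖q2 τ z‖ * ‖D1 τ z - D2 τ z‖ := by
              rw [norm_mul, norm_mul, hD1n, hDDn]
          _ ≤ Sq * 1 + (‖q₀ τ‖ + z₁) * SD := by
              have hzle : z ≤ z₁ := hzm.2
              nlinarith [norm_nonneg (q1 τ z - q2 τ z), norm_nonneg (D1 τ z),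
                norm_nonneg (q2 τ z), norm_nonneg (D1 τ z - D2 τ z), norm_nonneg (q₀ τ)]
      nlinarith [hle]
    have key := ftc_bound ht.le hf0 hfc hderiv hf'c hqInt (fun τ => norm_nonneg _)
      (by positivity) (by positivity) hbound htm
    have heq2 : (2 * Sq + 2 * z₁ * SD) * (t₁ - t₀) + (2 * SD) * ∫ τ in t₀..t₁, ‖q₀ τ‖
        = 2 * (t₁ - t₀) * Sq + 2 * M * SD := by
      rw [← hIeq, hM]; ring
    linarith [key, heq2.le, heq2.ge]
  -- estimate for D
  have HD : ∀ t ∈ Icc t₀ t₁, ∀ z ∈ Icc z₀ z₁,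
      ‖D1 t z - D2 t z‖ ≤ 2 * (t₁ - t₀) * Sq + 2 * M * SP := by
    intro t htm z hzm
    have hf0 : D1 t₀ z - D2 t₀ z = 0 := by rw [(hPD_edge z hzm).2]; exact sub_self _
    have hfc : ContinuousOn (fun τ => D1 τ z - D2 τ z) (Set.Icc t₀ t₁) :=
      (sliceCont hD1c hzm).sub (sliceCont hD2c hzm)
    have hf'c : ContinuousOn
        (fun τ => 2 * ((starRingEnd ℂ) (q1 τ z) * P1 τ z).re
                 - 2 * ((starRingEnd ℂ) (q2 τ z) * P2 τ z).re) (Set.Icc t₀ t₁) := by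
      apply ContinuousOn.sub
      · exact continuousOn_const.mul (Complex.continuous_re.comp_continuousOn
          (((Complex.continuous_conj.comp_continuousOn (sliceCont hq1c hzm))).mul
            (sliceCont hP1c hzm)))
      · exact continuousOn_const.mul (Complex.continuous_re.comp_continuousOn
          (((Complex.continuous_conj.comp_continuousOn (sliceCont hq2c hzm))).mul
            (sliceCont hP2c hzm)))
    have hderiv : ∀ x ∈ Set.Icc t₀ t₁, HasDerivWithinAt (fun τ => D1 τ z - D2 τ z)
        (2 * ((starRingEnd ℂ) (q1 x z) * P1 x z).re
          - 2 * ((starRingEnd ℂ) (q2 x z) * P2 x z).re) (Set.Icc t₀ t₁) x :=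
      fun x hx => ((hode1 x hx z hzm).2.2).sub ((hode2 x hx z hzm).2.2)
    have hbound : ∀ τ ∈ Set.Icc t₀ t₁,
        ‖2 * ((starRingEnd ℂ) (q1 τ z) * P1 τ z).re
          - 2 * ((starRingEnd ℂ) (q2 τ z) * P2 τ z).re‖
          ≤ (2 * Sq + 2 * z₁ * SP) + (2 * SP) * ‖q₀ τ‖ := by
      intro τ hτ
      have h1 : ‖q1 τ z - q2 τ z‖ ≤ Sq := hq_le τ hτ z hzm
      have h2 : ‖P1 τ z - P2 τ z‖ ≤ SP := hP_le τ hτ z hzm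
      have h3 : ‖q2 τ z‖ ≤ ‖q₀ τ‖ + z := by
        exact (hbd2 τ hτ z hzm).2.2
      have h4 : ‖P1 τ z‖ ≤ 1 := by exact (hbd1 τ hτ z hzm).1
      set w := (starRingEnd ℂ) (q1 τ z) * P1 τ z - (starRingEnd ℂ) (q2 τ z) * P2 τ z with hw
      have hre : 2 * ((starRingEnd ℂ) (q1 τ z) * P1 τ z).re
          - 2 * ((starRingEnd ℂ) (q2 τ z) * P2 τ z).re = 2 * w.re := by
        rw [hw, Complex.sub_re]; ring
      rw [hre, Real.norm_eq_abs, abs_mul]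
      have hwre : |w.re| ≤ ‖w‖ := by
        exact Complex.abs_re_le_norm w
      have hwn : ‖w‖ ≤ Sq * 1 + (‖q₀ τ‖ + z₁) * SP := by
        have hweq : w = (starRingEnd ℂ) (q1 τ z - q2 τ z) * P1 τ z
            + (starRingEnd ℂ) (q2 τ z) * (P1 τ z - P2 τ z) := by
          rw [hw, map_sub]; ring
        rw [hweq]
        calc ‖_ + _‖ ≤ ‖(starRingEnd ℂ) (q1 τ z - q2 τ z) * P1 τ z‖
            + ‖(starRingEnd ℂ) (q2 τ z) * (P1 τ z - P2 τ z)‖ := norm_add_le _ _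
          _ = ‖q1 τ z - q2 τ z‖ * ‖P1 τ z‖ + ‖q2 τ z‖ * ‖P1 τ z - P2 τ z‖ := by
              rw [norm_mul, norm_mul, RCLike.norm_conj, RCLike.norm_conj]
          _ ≤ Sq * 1 + (‖q₀ τ‖ + z₁) * SP := by
              have hzle : z ≤ z₁ := hzm.2
              nlinarith [norm_nonneg (q1 τ z - q2 τ z), norm_nonneg (P1 τ z),
                norm_nonneg (q2 τ z), norm_nonneg (P1 τ z - P2 τ z), norm_nonneg (q₀ τ)]
      have : |(2 : ℝ)| = 2 := by norm_num
      rw [this]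
      nlinarith [hwre, hwn]
    have key := ftc_bound ht.le hf0 hfc hderiv hf'c hqInt (fun τ => norm_nonneg _)
      (by positivity) (by positivity) hbound htm
    have heq2 : (2 * Sq + 2 * z₁ * SP) * (t₁ - t₀) + (2 * SP) * ∫ τ in t₀..t₁, ‖q₀ τ‖
        = 2 * (t₁ - t₀) * Sq + 2 * M * SP := by
      rw [← hIeq, hM]; ring
    linarith [key, heq2.le, heq2.ge]
  -- contraction
  have hSq' : Sq ≤ (z₁ - z₀) * SP :=
    Hq pq.1 (hpqK.1) pq.2 (hpqK.2)
  have hSP' : SP ≤ 2 * (t₁ - t₀) * Sq + 2 * M * SD :=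
    HP pP.1 (hpPK.1) pP.2 (hpPK.2)
  have hSD' : SD ≤ 2 * (t₁ - t₀) * Sq + 2 * M * SP :=
    HD pD.1 (hpDK.1) pD.2 (hpDK.2)
  set T := Sq + SP + SD with hT
  have hTnn : 0 ≤ T := by positivity
  set c := (z₁ - z₀) + 4 * (t₁ - t₀) + 4 * M with hc
  have hc1 : c < 1 := by rw [hc, hM, hI]; linarith [hsmall]
  have hstep : T ≤ c * T := by
    have e1 : (z₁ - z₀) * SP ≤ (z₁ - z₀) * T := by nlinarith
    have e2 : 4 * (t₁ - t₀) * Sq ≤ 4 * (t₁ - t₀) * T := by nlinarith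
    have e3 : 2 * M * SD + 2 * M * SP ≤ 4 * M * T := by nlinarith
    have : T ≤ (z₁ - z₀) * SP + 4 * (t₁ - t₀) * Sq + (2 * M * SD + 2 * M * SP) := by
      linarith
    calc T ≤ (z₁ - z₀) * SP + 4 * (t₁ - t₀) * Sq + (2 * M * SD + 2 * M * SP) := this
      _ ≤ (z₁ - z₀) * T + 4 * (t₁ - t₀) * T + 4 * M * T := by linarith
      _ = c * T := by rw [hc]; ring
  have hT0 : T = 0 := by
    by_contra hne
    have hTpos : 0 < T := lt_of_le_of_ne hTnn (Ne.symm hne)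
    nlinarith
  have hSq0 : Sq = 0 := by linarith
  have hSP0 : SP = 0 := by linarith
  have hSD0 : SD = 0 := by linarith
  intro t htm z hzm
  refine ⟨?_, ?_, ?_⟩
  · exact sub_eq_zero.mp (norm_le_zero_iff.mp (by
      have := hq_le t htm z hzm; linarith))
  · exact sub_eq_zero.mp (norm_le_zero_iff.mp (by
      have := hP_le t htm z hzm; linarith))
  · exact sub_eq_zero.mp (norm_le_zero_iff.mp (by
      have := hD_le t htm z hzm; linarith))
end
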